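/- Let F be a field of characteristic 2, ℓ ∈ Fⁿ, R = F[z]/⟨z₁²+ℓ₁²,…,zₙ²+ℓₙ²⟩. Call r ∈ R linear if r is the image of a polynomial of total degree at most 1. Suppose A = [L₁, c; c, L₂] is a symmetric 2×2 matrix over R with L₁, L₂ linear, c ∈ F a constant, and L₂ invertible in R. Then (det A)·L₂⁻¹ is linear in R. -/

import Mathlib

open MvPolynomial Matrix

set_option linter.unusedSectionVars false
set_option synthInstance.maxHeartbeats 100000
set_option maxHeartbeats 800000

section Aux
variable (F : Type*) [Field F] [CharP F 2] (n : ℕ) (ℓ : Fin n → F)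

private lemma aux_algebraMap (a : F) :
    algebraMap F (MvPolynomial (Fin n) F ⧸
        Ideal.span (Set.range fun i : Fin n => X i ^ 2 + C (ℓ i ^ 2))) a
      = Ideal.Quotient.mk _ (C a) := rfl

private lemma aux_sq (p : MvPolynomial (Fin n) F) :
    Ideal.Quotient.mk (Ideal.span (Set.range fun i : Fin n => X i ^ 2 + C (ℓ i ^ 2))) (p ^ 2)
      = algebraMap F _ ((eval ℓ p) ^ 2) := by
  haveI : CharP (MvPolynomial (Fin n) F) 2 := charP_of_injective_algebraMap' F 2
  have h1 : (Ideal.Quotient.mk (Ideal.span (Set.range fun i : Fin n =>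
        X i ^ 2 + C (ℓ i ^ 2)))).comp (frobenius (MvPolynomial (Fin n) F) 2) =
      (algebraMap F _).comp ((frobenius F 2).comp (eval ℓ)) := by
    apply MvPolynomial.ringHom_ext
    · intro a
      simp only [RingHom.comp_apply, frobenius_def, eval_C, map_pow, aux_algebraMap]
    · intro i
      have hmem : (X i ^ 2 + C (ℓ i ^ 2) : MvPolynomial (Fin n) F) ∈
          Ideal.span (Set.range fun i : Fin n => X i ^ 2 + C (ℓ i ^ 2)) :=
        Ideal.subset_span ⟨i, rfl⟩
      have h0 : Ideal.Quotient.mk _ (X i ^ 2 + C (ℓ i ^ 2) : MvPolynomial (Fin n) F) = 0 :=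
        Ideal.Quotient.eq_zero_iff_mem.mpr hmem
      rw [map_add] at h0
      have h2 := eq_neg_of_add_eq_zero_left h0
      simp only [RingHom.comp_apply, frobenius_def, eval_X]
      rw [h2, aux_algebraMap, ← map_neg, ← map_neg, CharTwo.neg_eq]
  have := congrArg (fun f => f p) h1
  simpa [frobenius_def] using this

end Aux

theorem stmt12 (F : Type*) [Field F] [CharP F 2] (n : ℕ) (ℓ : Fin n → F)
    (L₁ L₂ : MvPolynomial (Fin n) F ⧸
        Ideal.span (Set.range fun i : Fin n => X i ^ 2 + C (ℓ i ^ 2)))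
    (c : F)
    (hL₁ : ∃ p : MvPolynomial (Fin n) F, p.totalDegree ≤ 1 ∧
      Ideal.Quotient.mk (Ideal.span (Set.range fun i : Fin n => X i ^ 2 + C (ℓ i ^ 2))) p = L₁)
    (hL₂ : ∃ p : MvPolynomial (Fin n) F, p.totalDegree ≤ 1 ∧
      Ideal.Quotient.mk (Ideal.span (Set.range fun i : Fin n => X i ^ 2 + C (ℓ i ^ 2))) p = L₂)
    (hunit : IsUnit L₂) :
    ∃ p : MvPolynomial (Fin n) F, p.totalDegree ≤ 1 ∧
      Ideal.Quotient.mk (Ideal.span (Set.range fun i : Fin n => X i ^ 2 + C (ℓ i ^ 2))) p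
        = (!![L₁, algebraMap F _ c; algebraMap F _ c, L₂]).det * Ring.inverse L₂ := by
  haveI : CharP (MvPolynomial (Fin n) F) 2 := charP_of_injective_algebraMap' F 2
  obtain ⟨p₁, hp₁d, hp₁⟩ := hL₁
  obtain ⟨p₂, hp₂d, hp₂⟩ := hL₂
  have hker : ∀ a ∈ Ideal.span (Set.range fun i : Fin n => X i ^ 2 + C (ℓ i ^ 2)),
      eval ℓ a = 0 := by
    intro a ha
    have hle : Ideal.span (Set.range fun i : Fin n => X i ^ 2 + C (ℓ i ^ 2)) ≤
        RingHom.ker (eval ℓ) := by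
      rw [Ideal.span_le]
      rintro x ⟨i, rfl⟩
      simp only [SetLike.mem_coe, RingHom.mem_ker, map_add, map_pow, eval_X, eval_C]
      exact CharTwo.add_self_eq_zero _
    exact hle ha
  have hsq : L₂ * L₂ = algebraMap F _ ((eval ℓ p₂) ^ 2) := by
    rw [← hp₂, ← _root_.map_mul, ← pow_two]
    exact aux_sq F n ℓ p₂
  have he0 : eval ℓ p₂ ≠ 0 := by
    intro h0
    have hu : IsUnit (eval ℓ p₂) := by
      have := hunit.map (Ideal.Quotient.lift _ (eval ℓ) hker)
      rwa [← hp₂, Ideal.Quotient.lift_mk] at this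
    rw [h0] at hu
    exact hu.ne_zero rfl
  set e := eval ℓ p₂ with he
  have hone : L₂ * (algebraMap F _ ((e ^ 2)⁻¹) * L₂) = 1 := by
    rw [mul_left_comm, hsq, ← _root_.map_mul, inv_mul_cancel₀ (pow_ne_zero 2 he0), _root_.map_one]
  have hinv : Ring.inverse L₂ = algebraMap F _ ((e ^ 2)⁻¹) * L₂ := by
    have h := congrArg (fun x => Ring.inverse L₂ * x) hone
    simpa [← mul_assoc, Ring.inverse_mul_cancel L₂ hunit] using h.symm
  refine ⟨p₁ + C (c ^ 2 * (e ^ 2)⁻¹) * p₂, ?_, ?_⟩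
  · refine le_trans (totalDegree_add _ _) (max_le hp₁d ?_)
    exact le_trans (totalDegree_mul _ _)
      (by rw [totalDegree_C, zero_add]; exact hp₂d)
  · rw [Matrix.det_fin_two_of, hinv]
    rw [map_add, _root_.map_mul, hp₁, hp₂, ← aux_algebraMap]
    rw [sub_mul, mul_assoc L₁, hone, mul_one]
    have hA : algebraMap F _ c * algebraMap F _ c * (algebraMap F _ (e ^ 2)⁻¹ * L₂)
        = algebraMap F _ (c ^ 2 * (e ^ 2)⁻¹) * L₂ := by
      rw [← _root_.map_mul, ← pow_two, ← mul_assoc, ← _root_.map_mul]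
    rw [hA, sub_eq_add_neg, ← neg_mul (algebraMap F _ (c ^ 2 * (e ^ 2)⁻¹)) L₂, ← map_neg, CharTwo.neg_eq]
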